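/- Let G be a bipartite graph with parts X (|X| = m, all degrees l) and Y (|Y| = n, all degrees k), m ≥ n, ml = nk. Then for every integer t with l·⌈m/l⌉ ≤ t ≤ ml, there exists a proper edge t-coloring of G interval on X. -/

import Mathlib

/-- A proper edge `t`-coloring of the bipartite graph with parts `α`, `β` and
edge set `E ⊆ α × β`: colors lie in `{1,…,t}`, all colors are used, and
adjacent edges (sharing an endpoint) get distinct colors. -/
def IsProperEdgeColoring {α β : Type*} (E : Finset (α × β)) (t : ℕ)
    (φ : α × β → ℕ) : Prop :=
  (∀ e ∈ E, φ e ∈ Finset.Icc 1 t) ∧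
  (∀ c ∈ Finset.Icc 1 t, ∃ e ∈ E, φ e = c) ∧
  (∀ e ∈ E, ∀ e' ∈ E, e ≠ e' → (e.1 = e'.1 ∨ e.2 = e'.2) → φ e ≠ φ e')

/-- The spectrum of a vertex `x` of the part `α`: the set of colors on edges
incident with `x`. -/
def spectX {α β : Type*} [DecidableEq α] (E : Finset (α × β))
    (φ : α × β → ℕ) (x : α) : Finset ℕ :=
  (E.filter fun e => e.1 = x).image φ

/-- The spectrum of a vertex `y` of the part `β`. -/
def spectY {α β : Type*} [DecidableEq β] (E : Finset (α × β))
    (φ : α × β → ℕ) (y : β) : Finset ℕ :=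
  (E.filter fun e => e.2 = y).image φ

/-- Degree of a vertex of the part `α`. -/
def degX {α β : Type*} [DecidableEq α] (E : Finset (α × β)) (x : α) : ℕ :=
  (E.filter fun e => e.1 = x).card

/-- Degree of a vertex of the part `β`. -/
def degY {α β : Type*} [DecidableEq β] (E : Finset (α × β)) (y : β) : ℕ :=
  (E.filter fun e => e.2 = y).card

/-- A finite set of naturals is an interval: nonempty and consisting of
consecutive integers. -/
def IsIntervalFinset (S : Finset ℕ) : Prop :=
  S.Nonempty ∧ ∀ a ∈ S, ∀ b ∈ S, ∀ c, a ≤ c → c ≤ b → c ∈ S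

/-- The coloring is interval in every vertex of the part `α` (every vertex
with at least one incident edge has an interval spectrum). -/
def IntervalOnX {α β : Type*} [DecidableEq α] (E : Finset (α × β))
    (φ : α × β → ℕ) : Prop :=
  ∀ x : α, (spectX E φ x).Nonempty → IsIntervalFinset (spectX E φ x)

/-- The coloring is interval in every vertex of the part `β`. -/
def IntervalOnY {α β : Type*} [DecidableEq β] (E : Finset (α × β))
    (φ : α × β → ℕ) : Prop :=
  ∀ y : β, (spectY E φ y).Nonempty → IsIntervalFinset (spectY E φ y)

/-- Maximum degree of the bipartite graph. -/
def maxDeg {α β : Type*} [Fintype α] [Fintype β] [DecidableEq α] [DecidableEq β]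
    (E : Finset (α × β)) : ℕ :=
  max (Finset.univ.sup (degX E)) (Finset.univ.sup (degY E))

section helpers

variable {α β : Type*} [DecidableEq α] [DecidableEq β]

lemma card_filter_fst_mem (F : Finset (α × β)) (T : Finset α) :
    (F.filter (fun e => e.1 ∈ T)).card = ∑ x ∈ T, degX F x := by
  have h : F.filter (fun e => e.1 ∈ T) = T.biUnion (fun x => F.filter (fun e => e.1 = x)) := by
    ext e
    simp only [Finset.mem_filter, Finset.mem_biUnion]
    constructor
    · rintro ⟨he, ht⟩; exact ⟨e.1, ht, he, rfl⟩
    · rintro ⟨x, hx, he, rfl⟩; exact ⟨he, hx⟩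
  rw [h, Finset.card_biUnion]
  · rfl
  · intro x _ x' _ hxx'
    simp only [Finset.disjoint_left, Finset.mem_filter]
    rintro e ⟨_, rfl⟩ ⟨_, h2⟩
    exact hxx' h2

lemma card_filter_snd_mem (F : Finset (α × β)) (T : Finset β) :
    (F.filter (fun e => e.2 ∈ T)).card = ∑ y ∈ T, degY F y := by
  have h : F.filter (fun e => e.2 ∈ T) = T.biUnion (fun y => F.filter (fun e => e.2 = y)) := by
    ext e
    simp only [Finset.mem_filter, Finset.mem_biUnion]
    constructor
    · rintro ⟨he, ht⟩; exact ⟨e.2, ht, he, rfl⟩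
    · rintro ⟨y, hy, he, rfl⟩; exact ⟨he, hy⟩
  rw [h, Finset.card_biUnion]
  · rfl
  · intro y _ y' _ hyy'
    simp only [Finset.disjoint_left, Finset.mem_filter]
    rintro e ⟨_, rfl⟩ ⟨_, h2⟩
    exact hyy' h2

omit [DecidableEq α] in
lemma degY_le_cardW (F : Finset (α × β)) (W : Finset α) (hFW : ∀ e ∈ F, e.1 ∈ W) (y : β) :
    degY F y ≤ W.card := by
  rw [degY]
  apply Finset.card_le_card_of_injOn (fun e => e.1)
  · intro e he
    simp only [Finset.mem_coe, Finset.mem_filter] at he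
    exact hFW e he.1
  · intro e he e' he' h
    simp only [Finset.coe_filter, Set.mem_setOf_eq] at he he'
    exact Prod.ext h (he.2.trans he'.2.symm)

lemma koenig (r : ℕ) (F : Finset (α × β)) (W : Finset α)
    (hFW : ∀ e ∈ F, e.1 ∈ W)
    (hx : ∀ x ∈ W, degX F x = r)
    (hy : ∀ y : β, degY F y ≤ r) :
    ∃ ψ : α × β → ℕ,
      (∀ e ∈ F, ψ e ∈ Finset.Icc 1 r) ∧
      (∀ e ∈ F, ∀ e' ∈ F, e ≠ e' → (e.1 = e'.1 ∨ e.2 = e'.2) → ψ e ≠ ψ e') ∧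
      (∀ x ∈ W, spectX F ψ x = Finset.Icc 1 r) := by
  classical
  induction r generalizing F with
  | zero =>
    have hF : F = ∅ := by
      by_contra h
      obtain ⟨e, he⟩ := Finset.nonempty_iff_ne_empty.2 h
      have h0 := hx e.1 (hFW e he)
      have hmem : e ∈ F.filter (fun f => f.1 = e.1) := Finset.mem_filter.2 ⟨he, rfl⟩
      rw [degX, Finset.card_eq_zero] at h0
      rw [h0] at hmem
      exact absurd hmem (Finset.notMem_empty e)
    subst hF
    refine ⟨fun _ => 0, by simp, by simp, fun x hxW => ?_⟩
    have := hx x hxW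
    rw [degX, Finset.card_eq_zero] at this
    rw [spectX, this]
    simp
  | succ r ih =>
    set Ys := F.image Prod.snd with hYs
    set Yfull := Ys.filter (fun y => degY F y = r+1) with hYfull
    have hYfull_sub : Yfull ⊆ Ys := Finset.filter_subset _ _
    have hcardF : F.card = W.card * (r+1) := by
      have h1 : F.filter (fun e => e.1 ∈ W) = F :=
        Finset.filter_true_of_mem (fun e he => hFW e he)
      calc F.card = (F.filter (fun e => e.1 ∈ W)).card := by rw [h1]
        _ = ∑ x ∈ W, degX F x := card_filter_fst_mem F W
        _ = ∑ _x ∈ W, (r+1) := Finset.sum_congr rfl (fun x hxW => hx x hxW)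
        _ = W.card * (r+1) := by rw [Finset.sum_const, smul_eq_mul]
    have hcardFY : F.card = ∑ y ∈ Ys, degY F y := by
      have h1 : F.filter (fun e => e.2 ∈ Ys) = F :=
        Finset.filter_true_of_mem (fun e he => Finset.mem_image_of_mem _ he)
      rw [← card_filter_snd_mem, h1]
    have hWY : W.card ≤ Ys.card := by
      have h2 : F.card ≤ Ys.card * (r+1) := by
        rw [hcardFY]
        calc ∑ y ∈ Ys, degY F y ≤ ∑ _y ∈ Ys, (r+1) := Finset.sum_le_sum (fun y _ => hy y)
          _ = Ys.card * (r+1) := by rw [Finset.sum_const, smul_eq_mul]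
      rw [hcardF] at h2
      exact Nat.le_of_mul_le_mul_right h2 (Nat.succ_pos r)
    -- defect inequality
    have hdefect : ∀ T ⊆ W,
        (Yfull \ ((F.filter (fun e => e.1 ∈ T)).image Prod.snd)).card + T.card ≤ W.card := by
      intro T hTW
      set NT := (F.filter (fun e => e.1 ∈ T)).image Prod.snd with hNT
      set Z := Yfull \ NT with hZ
      have e1 : (F.filter (fun e => e.2 ∈ Z)).card = Z.card * (r+1) := by
        rw [card_filter_snd_mem]
        calc ∑ y ∈ Z, degY F y = ∑ _y ∈ Z, (r+1) := by
              apply Finset.sum_congr rfl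
              intro y hyZ
              have : y ∈ Yfull := (Finset.mem_sdiff.1 hyZ).1
              exact (Finset.mem_filter.1 this).2
          _ = Z.card * (r+1) := by rw [Finset.sum_const, smul_eq_mul]
      have e2 : F.filter (fun e => e.2 ∈ Z) ⊆ F.filter (fun e => e.1 ∈ W \ T) := by
        intro e he
        rw [Finset.mem_filter] at he ⊢
        refine ⟨he.1, Finset.mem_sdiff.2 ⟨hFW e he.1, fun hT => ?_⟩⟩
        have : e.2 ∈ NT := Finset.mem_image_of_mem _ (Finset.mem_filter.2 ⟨he.1, hT⟩)
        exact (Finset.mem_sdiff.1 he.2).2 this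
      have e3 : (F.filter (fun e => e.1 ∈ W \ T)).card = (W \ T).card * (r+1) := by
        rw [card_filter_fst_mem]
        calc ∑ x ∈ W \ T, degX F x = ∑ _x ∈ W \ T, (r+1) := by
              apply Finset.sum_congr rfl
              intro x hxWT
              exact hx x (Finset.mem_sdiff.1 hxWT).1
          _ = (W \ T).card * (r+1) := by rw [Finset.sum_const, smul_eq_mul]
      have e4 : Z.card * (r+1) ≤ (W \ T).card * (r+1) := by
        rw [← e1, ← e3]; exact Finset.card_le_card e2
      have e5 : Z.card ≤ (W \ T).card := Nat.le_of_mul_le_mul_right e4 (Nat.succ_pos r)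
      have e6 : (W \ T).card = W.card - T.card := Finset.card_sdiff_of_subset hTW
      have e7 : T.card ≤ W.card := Finset.card_le_card hTW
      omega

    -- Hall's condition and matching
    set nbr : ({x // x ∈ W} ⊕ Fin (Ys.card - W.card)) → Finset β :=
      Sum.elim (fun x : {x // x ∈ W} => (F.filter (fun e => e.1 = x.val)).image Prod.snd)
        (fun _ => Ys \ Yfull) with hnbr
    have hall : ∀ s : Finset ({x // x ∈ W} ⊕ Fin (Ys.card - W.card)),
        s.card ≤ (s.biUnion nbr).card := by
      intro s
      set T : Finset α := s.toLeft.image Subtype.val with hT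
      have hTW : T ⊆ W := by
        intro x hx'
        obtain ⟨x', _, rfl⟩ := Finset.mem_image.1 hx'
        exact x'.2
      have hTcard : T.card = s.toLeft.card :=
        Finset.card_image_of_injective _ Subtype.val_injective
      set NT := (F.filter (fun e => e.1 ∈ T)).image Prod.snd with hNT
      have subL : NT ⊆ s.biUnion nbr := by
        intro y hy'
        obtain ⟨e, he, rfl⟩ := Finset.mem_image.1 hy'
        rw [Finset.mem_filter] at he
        obtain ⟨x', hx's, hval⟩ := Finset.mem_image.1 he.2
        rw [Finset.mem_biUnion]
        refine ⟨Sum.inl x', Finset.mem_toLeft.1 hx's, ?_⟩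
        simp only [hnbr, Sum.elim_inl]
        exact Finset.mem_image_of_mem _ (Finset.mem_filter.2 ⟨he.1, hval.symm⟩)
      have hcount : T.card ≤ NT.card := by
        have c1 : (F.filter (fun e => e.1 ∈ T)).card = T.card * (r+1) := by
          rw [card_filter_fst_mem]
          calc ∑ x ∈ T, degX F x = ∑ _x ∈ T, (r+1) :=
                Finset.sum_congr rfl (fun x hxT => hx x (hTW hxT))
            _ = T.card * (r+1) := by rw [Finset.sum_const, smul_eq_mul]
        have c2 : F.filter (fun e => e.1 ∈ T) ⊆ F.filter (fun e => e.2 ∈ NT) := by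
          intro e he
          rw [Finset.mem_filter] at he ⊢
          exact ⟨he.1, Finset.mem_image_of_mem _ (Finset.mem_filter.2 he)⟩
        have c3 : (F.filter (fun e => e.2 ∈ NT)).card ≤ NT.card * (r+1) := by
          rw [card_filter_snd_mem]
          calc ∑ y ∈ NT, degY F y ≤ ∑ _y ∈ NT, (r+1) := Finset.sum_le_sum (fun y _ => hy y)
            _ = NT.card * (r+1) := by rw [Finset.sum_const, smul_eq_mul]
        have := (c1 ▸ Finset.card_le_card c2).trans c3
        exact Nat.le_of_mul_le_mul_right this (Nat.succ_pos r)
      by_cases hsr : s.toRight = ∅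
      · have hscard : s.toLeft.card + s.toRight.card = s.card :=
          Finset.card_toLeft_add_card_toRight
        have h0 : s.toRight.card = 0 := by rw [hsr]; rfl
        have : NT.card ≤ (s.biUnion nbr).card := Finset.card_le_card subL
        omega
      · -- right part nonempty
        have subR : Ys \ Yfull ⊆ s.biUnion nbr := by
          obtain ⟨j, hj⟩ := Finset.nonempty_iff_ne_empty.2 hsr
          intro y hy'
          rw [Finset.mem_biUnion]
          exact ⟨Sum.inr j, Finset.mem_toRight.1 hj, by simpa [hnbr] using hy'⟩
        have hsub : (Ys \ Yfull) ∪ (NT ∩ Yfull) ⊆ s.biUnion nbr := by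
          apply Finset.union_subset subR
          exact (Finset.inter_subset_left).trans subL
      -- cards
        have hdisj : Disjoint (Ys \ Yfull) (NT ∩ Yfull) := by
          rw [Finset.disjoint_left]
          intro y hy1 hy2
          exact (Finset.mem_sdiff.1 hy1).2 (Finset.mem_inter.1 hy2).2
        have hcard_union : (Ys \ Yfull).card + (NT ∩ Yfull).card
            = ((Ys \ Yfull) ∪ (NT ∩ Yfull)).card := (Finset.card_union_of_disjoint hdisj).symm
        have hsdYs : (Ys \ Yfull).card = Ys.card - Yfull.card := Finset.card_sdiff_of_subset hYfull_sub
        have hYfc : Yfull.card ≤ Ys.card := Finset.card_le_card hYfull_sub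
        have hdef : (Yfull \ NT).card + T.card ≤ W.card := hdefect T hTW
        have hsd2 : (Yfull \ NT).card + (Yfull ∩ NT).card = Yfull.card :=
          Finset.card_sdiff_add_card_inter _ _
        have hic : (NT ∩ Yfull).card = (Yfull ∩ NT).card := by rw [Finset.inter_comm]
        have hscard : s.toLeft.card + s.toRight.card = s.card :=
          Finset.card_toLeft_add_card_toRight
        have hsrD : s.toRight.card ≤ Ys.card - W.card := by
          calc s.toRight.card ≤ Fintype.card (Fin (Ys.card - W.card)) := Finset.card_le_univ _
            _ = Ys.card - W.card := Fintype.card_fin _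
        have hbig : ((Ys \ Yfull) ∪ (NT ∩ Yfull)).card ≤ (s.biUnion nbr).card :=
          Finset.card_le_card hsub
        omega
    obtain ⟨f, hfinj, hfm⟩ := (Finset.all_card_le_biUnion_card_iff_exists_injective nbr).1 hall
    -- the matched edges
    set Mset : Finset (α × β) := W.attach.image (fun x => (x.val, f (Sum.inl x))) with hMset
    have hchar : ∀ e : α × β, e ∈ Mset ↔ ∃ h : e.1 ∈ W, f (Sum.inl ⟨e.1, h⟩) = e.2 := by
      intro e
      rw [hMset, Finset.mem_image]
      constructor
      · rintro ⟨x, _, hxe⟩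
        obtain ⟨a, b⟩ := e
        rw [Prod.mk.injEq] at hxe
        obtain ⟨h1, h2⟩ := hxe
        subst h1
        exact ⟨x.2, by rw [← h2]⟩
      · rintro ⟨h, hfe⟩
        exact ⟨⟨e.1, h⟩, Finset.mem_attach _ _, by rw [hfe]⟩
    have hMsetF : Mset ⊆ F := by
      intro e he
      rw [hchar] at he
      obtain ⟨h, hfe⟩ := he
      have := hfm (Sum.inl ⟨e.1, h⟩)
      simp only [hnbr, Sum.elim_inl] at this
      rw [hfe] at this
      obtain ⟨e', he', hee'⟩ := Finset.mem_image.1 this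
      rw [Finset.mem_filter] at he'
      have : e' = e := Prod.ext he'.2 hee'
      rw [← this]; exact he'.1
    set F' := F \ Mset with hF'
    have hFW' : ∀ e ∈ F', e.1 ∈ W := fun e he => hFW e (Finset.mem_sdiff.1 he).1
    have hx' : ∀ x ∈ W, degX F' x = r := by
      intro x hxW
      have hme : (x, f (Sum.inl ⟨x, hxW⟩)) ∈ Mset := (hchar _).2 ⟨hxW, rfl⟩
      have hsplit : F'.filter (fun e => e.1 = x)
          = (F.filter (fun e => e.1 = x)).erase (x, f (Sum.inl ⟨x, hxW⟩)) := by
        ext e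
        rw [Finset.mem_erase, Finset.mem_filter, Finset.mem_filter, hF', Finset.mem_sdiff]
        constructor
        · rintro ⟨⟨heF, heM⟩, hex⟩
          refine ⟨fun hcon => heM ?_, heF, hex⟩
          rw [hcon]; exact hme
        · rintro ⟨hne, heF, hex⟩
          refine ⟨⟨heF, fun heM => hne ?_⟩, hex⟩
          rw [hchar] at heM
          obtain ⟨h, hfe⟩ := heM
          obtain ⟨a, b⟩ := e
          simp only at hex hfe
          subst hex
          rw [← hfe]
        
      have hmemf : (x, f (Sum.inl ⟨x, hxW⟩)) ∈ F.filter (fun e => e.1 = x) :=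
        Finset.mem_filter.2 ⟨hMsetF hme, rfl⟩
      rw [degX, hsplit, Finset.card_erase_of_mem hmemf, ← degX, hx x hxW]
      omega
    have hy' : ∀ y : β, degY F' y ≤ r := by
      intro y
      by_cases hcase : degY F y ≤ r
      · have hsub : F'.filter (fun e => e.2 = y) ⊆ F.filter (fun e => e.2 = y) :=
          Finset.filter_subset_filter _ Finset.sdiff_subset
        calc degY F' y ≤ degY F y := Finset.card_le_card hsub
          _ ≤ r := hcase
      · have hdeg : degY F y = r + 1 := le_antisymm (hy y) (by omega)
        have hyYs : y ∈ Ys := by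
          have hpos : 0 < degY F y := by omega
          rw [degY, Finset.card_pos] at hpos
          obtain ⟨e, he⟩ := hpos
          rw [Finset.mem_filter] at he
          rw [hYs, ← he.2]
          exact Finset.mem_image_of_mem _ he.1
        have hyfull : y ∈ Yfull := by
          rw [hYfull, Finset.mem_filter]
          exact ⟨hyYs, hdeg⟩
        -- y is matched
        have himage : Finset.univ.image f = Ys := by
          apply Finset.eq_of_subset_of_card_le
          · intro z hz
            obtain ⟨w, _, rfl⟩ := Finset.mem_image.1 hz
            cases w with
            | inl x =>
              have := hfm (Sum.inl x)
              simp only [hnbr, Sum.elim_inl] at this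
              obtain ⟨e', he', hee'⟩ := Finset.mem_image.1 this
              rw [← hee', hYs]
              exact Finset.mem_image_of_mem _ (Finset.mem_filter.1 he').1
            | inr j =>
              have := hfm (Sum.inr j)
              simp only [hnbr, Sum.elim_inr] at this
              exact (Finset.mem_sdiff.1 this).1
          · rw [Finset.card_image_of_injective _ hfinj, Finset.card_univ]
            simp only [Fintype.card_sum, Fintype.card_coe, Fintype.card_fin]
            omega
        have hymem : y ∈ Finset.univ.image f := by rw [himage]; exact hyYs
        obtain ⟨z, _, hz⟩ := Finset.mem_image.1 hymem
        obtain (x | j) := z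
        · -- matched by real vertex
          have hmatched : (x.val, y) ∈ Mset := (hchar _).2 ⟨x.2, by
            simpa using hz⟩
          have hsub2 : F'.filter (fun e => e.2 = y)
              ⊆ (F.filter (fun e => e.2 = y)).erase (x.val, y) := by
            intro e he
            rw [Finset.mem_filter, hF', Finset.mem_sdiff] at he
            rw [Finset.mem_erase, Finset.mem_filter]
            refine ⟨fun hcon => he.1.2 ?_, he.1.1, he.2⟩
            rw [hcon]; exact hmatched
          calc degY F' y ≤ ((F.filter (fun e => e.2 = y)).erase (x.val, y)).card :=
                Finset.card_le_card hsub2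
            _ = degY F y - 1 := by
                rw [Finset.card_erase_of_mem, degY]
                exact Finset.mem_filter.2 ⟨hMsetF hmatched, rfl⟩
            _ ≤ r := by omega
        · exfalso
          have := hfm (Sum.inr j)
          simp only [hnbr, Sum.elim_inr] at this
          rw [hz] at this
          exact (Finset.mem_sdiff.1 this).2 hyfull
    obtain ⟨ψ', h1', h2', h3'⟩ := ih F' hFW' hx' hy'
    refine ⟨fun e => if e ∈ Mset then r+1 else ψ' e, ?_, ?_, ?_⟩
    · intro e he
      by_cases hm : e ∈ Mset
      · simp only [hm, if_pos]
        rw [Finset.mem_Icc]; omega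
      · simp only [hm, if_neg, if_false]
        have := h1' e (Finset.mem_sdiff.2 ⟨he, hm⟩)
        rw [Finset.mem_Icc] at this ⊢
        omega
    · intro e he e' he' hne hadj
      by_cases hm : e ∈ Mset <;> by_cases hm' : e' ∈ Mset
      · exfalso
        rw [hchar] at hm hm'
        obtain ⟨h, hfe⟩ := hm
        obtain ⟨h', hfe'⟩ := hm'
        cases hadj with
        | inl h11 =>
          apply hne
          refine Prod.ext h11 ?_
          rw [← hfe, ← hfe']
          have hsubt : (⟨e.1, h⟩ : {x // x ∈ W}) = ⟨e'.1, h'⟩ := Subtype.ext h11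
          rw [hsubt]
        | inr h22 =>
          apply hne
          have : (Sum.inl (⟨e.1, h⟩ : {x // x ∈ W}) : {x // x ∈ W} ⊕ Fin (Ys.card - W.card))
              = Sum.inl ⟨e'.1, h'⟩ := hfinj (by rw [hfe, hfe', h22])
          have h11 : e.1 = e'.1 := by
            have := Sum.inl.inj this
            exact congrArg Subtype.val this
          exact Prod.ext h11 h22
      · simp only [hm, hm', if_pos, if_neg, if_false]
        have := h1' e' (Finset.mem_sdiff.2 ⟨he', hm'⟩)
        rw [Finset.mem_Icc] at this
        omega
      · simp only [hm, hm', if_pos, if_neg, if_false]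
        have := h1' e (Finset.mem_sdiff.2 ⟨he, hm⟩)
        rw [Finset.mem_Icc] at this
        omega
      · simp only [hm, hm', if_neg, if_false]
        exact h2' e (Finset.mem_sdiff.2 ⟨he, hm⟩) e' (Finset.mem_sdiff.2 ⟨he', hm'⟩) hne hadj
    · intro x hxW
      set me : α × β := (x, f (Sum.inl ⟨x, hxW⟩)) with hmedef
      have hme : me ∈ Mset := (hchar _).2 ⟨hxW, rfl⟩
      have hsplit : F.filter (fun e => e.1 = x) = insert me (F'.filter (fun e => e.1 = x)) := by
        ext e
        rw [Finset.mem_insert, Finset.mem_filter, Finset.mem_filter, hF', Finset.mem_sdiff]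
        constructor
        · rintro ⟨heF, hex⟩
          by_cases hm : e ∈ Mset
          · left
            rw [hchar] at hm
            obtain ⟨h, hfe⟩ := hm
            obtain ⟨a, b⟩ := e
            simp only at hex hfe
            subst hex
            rw [hmedef, ← hfe]
          · right; exact ⟨⟨heF, hm⟩, hex⟩
        · rintro (rfl | ⟨⟨heF, _⟩, hex⟩)
          · exact ⟨hMsetF hme, rfl⟩
          · exact ⟨heF, hex⟩
      have hnotmem : me ∉ F'.filter (fun e => e.1 = x) := by
        rw [Finset.mem_filter, hF', Finset.mem_sdiff]
        rintro ⟨⟨_, hcon⟩, _⟩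
        exact hcon hme
      rw [spectX, hsplit, Finset.image_insert]
      have hcong : (F'.filter (fun e => e.1 = x)).image (fun e => if e ∈ Mset then r+1 else ψ' e)
          = (F'.filter (fun e => e.1 = x)).image ψ' := by
        apply Finset.image_congr
        intro e he
        rw [Finset.mem_coe, Finset.mem_filter, hF', Finset.mem_sdiff] at he
        simp only [he.1.2, if_neg, if_false]
      have hmeval : (if me ∈ Mset then r+1 else ψ' me) = r+1 := if_pos hme
      rw [hcong, hmeval]
      have := h3' x hxW
      rw [spectX] at this
      rw [this]
      ext c
      simp only [Finset.mem_insert, Finset.mem_Icc]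
      omega

lemma koenigShift (l d : ℕ) (hd1 : 1 ≤ d) (hdl : d ≤ l)
    (F : Finset (α × β)) (W : Finset α) (u : α) (huW : u ∈ W)
    (v : α) (hvW : v ∈ W) (hvu : v ≠ u)
    (hFW : ∀ e ∈ F, e.1 ∈ W)
    (hx : ∀ x ∈ W, degX F x = l)
    (hy : ∀ y : β, degY F y ≤ l) :
    ∃ ψ : α × β → ℕ,
      (∀ e ∈ F, ψ e ∈ Finset.Icc 1 (l+d)) ∧
      (∀ e ∈ F, ∀ e' ∈ F, e ≠ e' → (e.1 = e'.1 ∨ e.2 = e'.2) → ψ e ≠ ψ e') ∧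
      (∀ x ∈ W, spectX F ψ x = Finset.Icc 1 l ∨ spectX F ψ x = Finset.Icc (d+1) (l+d)) ∧
      (∀ c ∈ Finset.Icc 1 (l+d), ∃ e ∈ F, ψ e = c) := by
  classical
  obtain ⟨ψ0, h1, h2, h3⟩ := koenig l F W hFW hx hy
  set ψ : α × β → ℕ := fun e => if e.1 = u ∧ ψ0 e ≤ d then ψ0 e + l else ψ0 e with hψdef
  have hval : ∀ e ∈ F, (1 ≤ ψ0 e ∧ ψ0 e ≤ l) := by
    intro e he
    exact Finset.mem_Icc.1 (h1 e he)
  have hspec_ne : ∀ x ∈ W, x ≠ u → spectX F ψ x = Finset.Icc 1 l := by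
    intro x hxW hxu
    have hcong : spectX F ψ x = spectX F ψ0 x := by
      rw [spectX, spectX]
      apply Finset.image_congr
      intro e he
      rw [Finset.mem_coe, Finset.mem_filter] at he
      have : ¬(e.1 = u ∧ ψ0 e ≤ d) := by
        rintro ⟨hc, _⟩
        exact hxu (he.2.symm.trans hc)
      simp only [hψdef, this, if_neg, if_false]
    rw [hcong]
    exact h3 x hxW
  have hspec_u : spectX F ψ u = Finset.Icc (d+1) (l+d) := by
    have h3u := h3 u huW
    rw [spectX] at h3u ⊢
    ext c
    rw [Finset.mem_image, Finset.mem_Icc]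
    constructor
    · rintro ⟨e, he, rfl⟩
      rw [Finset.mem_filter] at he
      have hb := hval e he.1
      by_cases hc : e.1 = u ∧ ψ0 e ≤ d
      · simp only [hψdef]
        rw [if_pos hc]
        omega
      · simp only [hψdef]
        rw [if_neg hc]
        have : ¬(ψ0 e ≤ d) := fun hle => hc ⟨he.2, hle⟩
        omega
    · intro hc
      by_cases hcl : c ≤ l
      · have : c ∈ Finset.Icc 1 l := Finset.mem_Icc.2 ⟨by omega, hcl⟩
        rw [← h3u, Finset.mem_image] at this
        obtain ⟨e, he, hec⟩ := this
        refine ⟨e, he, ?_⟩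
        have : ¬(e.1 = u ∧ ψ0 e ≤ d) := by
          rintro ⟨_, hle⟩
          omega
        simp only [hψdef]
        rw [if_neg this]
        exact hec
      · have : c - l ∈ Finset.Icc 1 l := Finset.mem_Icc.2 ⟨by omega, by omega⟩
        rw [← h3u, Finset.mem_image] at this
        obtain ⟨e, he, hec⟩ := this
        rw [Finset.mem_filter] at he
        refine ⟨e, Finset.mem_filter.2 he, ?_⟩
        have hcc : e.1 = u ∧ ψ0 e ≤ d := ⟨he.2, by omega⟩
        simp only [hψdef]
        rw [if_pos hcc]
        omega
  refine ⟨ψ, ?_, ?_, ?_, ?_⟩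
  · intro e he
    have hb := hval e he
    rw [Finset.mem_Icc]
    by_cases hc : e.1 = u ∧ ψ0 e ≤ d
    · simp only [hψdef]; rw [if_pos hc]; omega
    · simp only [hψdef]; rw [if_neg hc]; omega
  · intro e he e' he' hne hadj
    have hb := hval e he
    have hb' := hval e' he'
    have hψ0 := h2 e he e' he' hne hadj
    by_cases c1 : e.1 = u ∧ ψ0 e ≤ d <;> by_cases c2 : e'.1 = u ∧ ψ0 e' ≤ d
    · simp only [hψdef]; rw [if_pos c1, if_pos c2]; omega
    · simp only [hψdef]; rw [if_pos c1, if_neg c2]; omega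
    · simp only [hψdef]; rw [if_neg c1, if_pos c2]; omega
    · simp only [hψdef]; rw [if_neg c1, if_neg c2]; omega
  · intro x hxW
    by_cases hxu : x = u
    · right; rw [hxu]; exact hspec_u
    · left; exact hspec_ne x hxW hxu
  · intro c hc
    rw [Finset.mem_Icc] at hc
    by_cases hcl : c ≤ l
    · have : c ∈ spectX F ψ v := by
        rw [hspec_ne v hvW hvu, Finset.mem_Icc]
        omega
      rw [spectX, Finset.mem_image] at this
      obtain ⟨e, he, hec⟩ := this
      exact ⟨e, (Finset.mem_filter.1 he).1, hec⟩
    · have : c ∈ spectX F ψ u := by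
        rw [hspec_u, Finset.mem_Icc]
        omega
      rw [spectX, Finset.mem_image] at this
      obtain ⟨e, he, hec⟩ := this
      exact ⟨e, (Finset.mem_filter.1 he).1, hec⟩

lemma filter_class_fst [Fintype α] (E : Finset (α × β)) (gr : α → ℕ) (c : ℕ) (x : α)
    (hx : gr x = c) :
    (E.filter (fun e => gr e.1 = c)).filter (fun e => e.1 = x)
      = E.filter (fun e => e.1 = x) := by
  ext e
  simp only [Finset.mem_filter]
  constructor
  · rintro ⟨⟨he, _⟩, hx'⟩; exact ⟨he, hx'⟩
  · rintro ⟨he, hx'⟩; exact ⟨⟨he, by rw [hx']; exact hx⟩, hx'⟩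

lemma classSetup [Fintype α] (E : Finset (α × β)) (l : ℕ) (hdX : ∀ x, degX E x = l)
    (gr : α → ℕ) (c : ℕ)
    (hcard : (Finset.univ.filter (fun x => gr x = c)).card ≤ l) :
    ∃ ψ : α × β → ℕ,
      (∀ e ∈ E.filter (fun e => gr e.1 = c), ψ e ∈ Finset.Icc 1 l) ∧
      (∀ e ∈ E.filter (fun e => gr e.1 = c), ∀ e' ∈ E.filter (fun e => gr e.1 = c),
        e ≠ e' → (e.1 = e'.1 ∨ e.2 = e'.2) → ψ e ≠ ψ e') ∧
      (∀ x : α, gr x = c → spectX (E.filter (fun e => gr e.1 = c)) ψ x = Finset.Icc 1 l) := by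
  classical
  set W := Finset.univ.filter (fun x => gr x = c) with hW
  have hFW : ∀ e ∈ E.filter (fun e => gr e.1 = c), e.1 ∈ W := by
    intro e he
    rw [hW, Finset.mem_filter]
    exact ⟨Finset.mem_univ _, (Finset.mem_filter.1 he).2⟩
  have hx : ∀ x ∈ W, degX (E.filter (fun e => gr e.1 = c)) x = l := by
    intro x hxW
    rw [degX, filter_class_fst E gr c x (Finset.mem_filter.1 hxW).2, ← degX]
    exact hdX x
  have hy : ∀ y : β, degY (E.filter (fun e => gr e.1 = c)) y ≤ l :=
    fun y => (degY_le_cardW _ W hFW y).trans hcard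
  obtain ⟨ψ, h1, h2, h3⟩ := koenig l (E.filter (fun e => gr e.1 = c)) W hFW hx hy
  exact ⟨ψ, h1, h2, fun x hxc => h3 x (Finset.mem_filter.2 ⟨Finset.mem_univ _, hxc⟩)⟩

lemma classShiftSetup [Fintype α] (E : Finset (α × β)) (l d : ℕ) (hd1 : 1 ≤ d) (hdl : d ≤ l)
    (hdX : ∀ x, degX E x = l)
    (gr : α → ℕ) (c : ℕ) (u v : α) (hu : gr u = c) (hv : gr v = c) (hvu : v ≠ u)
    (hcard : (Finset.univ.filter (fun x => gr x = c)).card ≤ l) :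
    ∃ ψ : α × β → ℕ,
      (∀ e ∈ E.filter (fun e => gr e.1 = c), ψ e ∈ Finset.Icc 1 (l+d)) ∧
      (∀ e ∈ E.filter (fun e => gr e.1 = c), ∀ e' ∈ E.filter (fun e => gr e.1 = c),
        e ≠ e' → (e.1 = e'.1 ∨ e.2 = e'.2) → ψ e ≠ ψ e') ∧
      (∀ x : α, gr x = c →
        spectX (E.filter (fun e => gr e.1 = c)) ψ x = Finset.Icc 1 l ∨
        spectX (E.filter (fun e => gr e.1 = c)) ψ x = Finset.Icc (d+1) (l+d)) ∧
      (∀ cc ∈ Finset.Icc 1 (l+d), ∃ e ∈ E.filter (fun e => gr e.1 = c), ψ e = cc) := by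
  classical
  set W := Finset.univ.filter (fun x => gr x = c) with hW
  have hFW : ∀ e ∈ E.filter (fun e => gr e.1 = c), e.1 ∈ W := by
    intro e he
    rw [hW, Finset.mem_filter]
    exact ⟨Finset.mem_univ _, (Finset.mem_filter.1 he).2⟩
  have hx : ∀ x ∈ W, degX (E.filter (fun e => gr e.1 = c)) x = l := by
    intro x hxW
    rw [degX, filter_class_fst E gr c x (Finset.mem_filter.1 hxW).2, ← degX]
    exact hdX x
  have hy : ∀ y : β, degY (E.filter (fun e => gr e.1 = c)) y ≤ l :=
    fun y => (degY_le_cardW _ W hFW y).trans hcard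
  obtain ⟨ψ, h1, h2, h3, h4⟩ := koenigShift l d hd1 hdl (E.filter (fun e => gr e.1 = c)) W
    u (Finset.mem_filter.2 ⟨Finset.mem_univ _, hu⟩)
    v (Finset.mem_filter.2 ⟨Finset.mem_univ _, hv⟩) hvu hFW hx hy
  exact ⟨ψ, h1, h2, fun x hxc => h3 x (Finset.mem_filter.2 ⟨Finset.mem_univ _, hxc⟩), h4⟩

lemma spectX_shift_class [Fintype α] (E : Finset (α × β)) (gr : α → ℕ) (c : ℕ) (x : α)
    (hx : gr x = c) (ψ : α × β → ℕ) (off : ℕ) (φ : α × β → ℕ)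
    (hφ : ∀ e, gr e.1 = c → φ e = off + ψ e) :
    spectX E φ x
      = (spectX (E.filter (fun e => gr e.1 = c)) ψ x).image (fun v => off + v) := by
  rw [spectX, spectX, ← filter_class_fst E gr c x hx, Finset.image_image]
  apply Finset.image_congr
  intro e he
  rw [Finset.mem_coe, Finset.mem_filter, Finset.mem_filter] at he
  exact hφ e he.1.2

end helpers

lemma isIntervalIcc (a b : ℕ) (hab : a ≤ b) : IsIntervalFinset (Finset.Icc a b) := by
  constructor
  · exact Finset.nonempty_Icc.2 hab
  · intro p hp q hq cc hpc hcq
    rw [Finset.mem_Icc] at *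
    omega




lemma chunk_lt {N Q i : ℕ} (hQ : 0 < Q) (hiN : i < N) : i * Q / N < Q := by
  have hN : 0 < N := Nat.lt_of_le_of_lt (Nat.zero_le i) hiN
  rw [Nat.div_lt_iff_lt_mul hN]
  calc i * Q < N * Q := by exact mul_lt_mul_of_pos_right hiN hQ
  _ = Q * N := mul_comm _ _

lemma chunk_surj {N Q : ℕ} (c : ℕ) (hQ : 0 < Q) (hQN : Q ≤ N) (hc : c < Q) :
    ∃ i, i < N ∧ i * Q / N = c := by
  have hN : 0 < N := lt_of_lt_of_le hQ hQN
  obtain ⟨q1, hq1⟩ : ∃ q1, Q = q1 + 1 := ⟨Q - 1, by omega⟩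
  obtain ⟨i, r, hir, hr⟩ : ∃ i r, Q * i + r = c * N + q1 ∧ r < Q :=
    ⟨(c*N+q1)/Q, (c*N+q1)%Q, Nat.div_add_mod _ _, Nat.mod_lt _ hQ⟩
  have hcq : c ≤ q1 := by omega
  have hA : c * N ≤ q1 * N := Nat.mul_le_mul_right N hcq
  have hq1N : q1 < N := by omega
  have hiN : i < N := by
    by_contra h
    push_neg at h
    have hmul : Q * N ≤ Q * i := Nat.mul_le_mul_left Q h
    have hQN' : Q * N = q1 * N + N := by rw [hq1]; ring
    linarith
  refine ⟨i, hiN, ?_⟩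
  have hcomm : i * Q = Q * i := mul_comm _ _
  have hge : c ≤ i * Q / N := by
    rw [Nat.le_div_iff_mul_le hN]
    linarith
  have hlt : i * Q / N < c + 1 := by
    rw [Nat.div_lt_iff_lt_mul hN]
    have hh : (c + 1) * N = c * N + N := by ring
    linarith
  omega

lemma chunk_mem_Ico {N Q L : ℕ} (c : ℕ) (hQ : 0 < Q) (hNL : N ≤ Q * L) (hN : 0 < N) :
    ∃ lo, ∀ i, i < N → i * Q / N = c → lo ≤ i ∧ i < lo + L := by
  obtain ⟨q1, hq1⟩ : ∃ q1, Q = q1 + 1 := ⟨Q - 1, by omega⟩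
  obtain ⟨lo, r, hir, hr⟩ : ∃ lo r, Q * lo + r = c * N + q1 ∧ r < Q :=
    ⟨(c*N+q1)/Q, (c*N+q1)%Q, Nat.div_add_mod _ _, Nat.mod_lt _ hQ⟩
  refine ⟨lo, fun i hiN hg => ?_⟩
  have hcomm : i * Q = Q * i := mul_comm _ _
  have hge : c * N ≤ i * Q := (Nat.le_div_iff_mul_le hN).1 (le_of_eq hg.symm)
  have hlt : i * Q < c * N + N := by
    have h1 : i * Q / N < c + 1 := by omega
    have h2 := (Nat.div_lt_iff_lt_mul hN).1 h1
    have hh : (c + 1) * N = c * N + N := by ring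
    linarith
  constructor
  · by_contra h
    push_neg at h
    have hmul : Q * (i + 1) ≤ Q * lo := Nat.mul_le_mul_left Q h
    have hexp : Q * (i + 1) = Q * i + Q := by ring
    linarith
  · by_contra h
    push_neg at h
    have hmul : Q * (lo + L) ≤ Q * i := Nat.mul_le_mul_left Q h
    have hexp : Q * (lo + L) = Q * lo + Q * L := by ring
    linarith


/-- For an `(l,k)`-biregular bipartite graph (`|X| = m`,
`|Y| = n`, `m ≥ n`, `ml = nk`) and every `t` with `l·⌈m/l⌉ ≤ t ≤ ml`, there
is a proper edge `t`-coloring interval on `X`. -/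
theorem stmt14 {α β : Type*} [Fintype α] [Fintype β] [DecidableEq α] [DecidableEq β]
    (E : Finset (α × β)) (m n l k : ℕ)
    (hm : 0 < m) (hn : 0 < n) (hl : 0 < l) (hk : 0 < k)
    (hcardX : Fintype.card α = m) (hcardY : Fintype.card β = n)
    (hdX : ∀ x : α, degX E x = l) (hdY : ∀ y : β, degY E y = k)
    (hnm : n ≤ m) (hml : m * l = n * k) :
    ∀ t : ℕ, l * ((m + l - 1) / l) ≤ t → t ≤ m * l →
      ∃ φ : α × β → ℕ, IsProperEdgeColoring E t φ ∧ IntervalOnX E φ := by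
  intro t ht1 ht2
  classical
  have he0 : α ≃ Fin m := Fintype.equivFinOfCardEq hcardX
  set idx : α → ℕ := fun x => (he0 x).val with hidxdef
  have hidxlt : ∀ x, idx x < m := fun x => (he0 x).2
  have hidxinj : Function.Injective idx := fun a b h => he0.injective (Fin.ext h)
  have hinv : ∀ i (h : i < m), idx (he0.symm ⟨i, h⟩) = i := by
    intro i h
    simp [hidxdef]
  have hceil : m ≤ l * ((m + l - 1) / l) := by
    have h1 : l * ((m + l - 1) / l) + (m + l - 1) % l = m + l - 1 := Nat.div_add_mod _ _
    have h2 : (m + l - 1) % l < l := Nat.mod_lt _ hl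
    set P0 := l * ((m + l - 1) / l)
    omega
  have hmt : m ≤ t := le_trans hceil ht1
  obtain ⟨q, d, hqd, hdl⟩ : ∃ q d, l * q + d = t ∧ d < l :=
    ⟨t/l, t%l, Nat.div_add_mod t l, Nat.mod_lt _ hl⟩
  have hmlq : m ≤ l * q := by
    have hCq : (m + l - 1) / l ≤ q := by
      rcases Nat.lt_or_ge q ((m + l - 1) / l) with h | h
      · exfalso
        have h5 : q + 1 ≤ (m + l - 1)/l := h
        have h3 : l * (q+1) ≤ l * ((m+l-1)/l) := Nat.mul_le_mul_left l h5
        have h4 : l * (q + 1) = l * q + l := by ring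
        omega
      · exact h
    calc m ≤ l * ((m + l - 1)/l) := hceil
      _ ≤ l * q := Nat.mul_le_mul_left l hCq
  have hq1 : 1 ≤ q := by
    rcases Nat.eq_zero_or_pos q with h | h
    · rw [h, Nat.mul_zero] at hmlq; omega
    · exact h
  have hqm : q ≤ m := by
    by_contra h
    push_neg at h
    have h3 : l * (m + 1) ≤ l * q := Nat.mul_le_mul_left l h
    have h4 : l * (m+1) = m * l + l := by ring
    omega
  by_cases hd0 : d = 0
  · -- case l ∣ t : q aligned groups
    have htlq : t = l * q := by omega
    set gr : α → ℕ := fun x => idx x * q / m with hgrdef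
    have hgrlt : ∀ x, gr x < q := fun x => chunk_lt hq1 (hidxlt x)
    have hcard_all : ∀ c, (Finset.univ.filter (fun x => gr x = c)).card ≤ l := by
      intro c
      by_cases hc : c < q
      · obtain ⟨lo, hlo⟩ := chunk_mem_Ico (N := m) (Q := q) (L := l) c hq1
          (by rw [mul_comm] at hmlq; exact hmlq) hm
        calc (Finset.univ.filter (fun x => gr x = c)).card
            ≤ (Finset.Ico lo (lo + l)).card := by
              apply Finset.card_le_card_of_injOn idx
              · intro x hx
                rw [Finset.mem_coe, Finset.mem_filter] at hx
                have := hlo (idx x) (hidxlt x) hx.2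
                rw [Finset.mem_coe, Finset.mem_Ico]
                omega
              · intro a _ b _ hab
                exact hidxinj hab
          _ = l := by rw [Nat.card_Ico]; omega
      · have : Finset.univ.filter (fun x => gr x = c) = ∅ := by
          rw [Finset.filter_eq_empty_iff]
          intro x _
          have := hgrlt x
          omega
        rw [this]
        simp
    have hnonempty : ∀ c, c < q → ∃ x : α, gr x = c := by
      intro c hc
      obtain ⟨i, hiN, hic⟩ := chunk_surj c hq1 hqm hc
      refine ⟨he0.symm ⟨i, hiN⟩, ?_⟩
      show idx (he0.symm ⟨i, hiN⟩) * q / m = c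
      rw [hinv i hiN, hic]
    have hcol : ∀ c, ∃ ψ : α × β → ℕ,
        (∀ e ∈ E.filter (fun e => gr e.1 = c), ψ e ∈ Finset.Icc 1 l) ∧
        (∀ e ∈ E.filter (fun e => gr e.1 = c), ∀ e' ∈ E.filter (fun e => gr e.1 = c),
          e ≠ e' → (e.1 = e'.1 ∨ e.2 = e'.2) → ψ e ≠ ψ e') ∧
        (∀ x : α, gr x = c → spectX (E.filter (fun e => gr e.1 = c)) ψ x = Finset.Icc 1 l) :=
      fun c => classSetup E l hdX gr c (hcard_all c)
    choose Ψ hΨ1 hΨ2 hΨ3 using hcol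
    refine ⟨fun e => gr e.1 * l + Ψ (gr e.1) e, ⟨?_, ?_, ?_⟩, ?_⟩
    · -- range
      intro e he
      have hmem : e ∈ E.filter (fun e' => gr e'.1 = gr e.1) :=
        Finset.mem_filter.2 ⟨he, rfl⟩
      have hb := Finset.mem_Icc.1 (hΨ1 (gr e.1) e hmem)
      have hcq := hgrlt e.1
      have h6 : gr e.1 * l + l ≤ q * l :=
        (by ring : gr e.1 * l + l = (gr e.1 + 1) * l) ▸
          Nat.mul_le_mul_right l (Nat.succ_le_of_lt hcq)
      rw [Finset.mem_Icc]
      have h7 : q * l = l * q := mul_comm _ _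
      show 1 ≤ gr e.1 * l + Ψ (gr e.1) e ∧ gr e.1 * l + Ψ (gr e.1) e ≤ t
      omega
    · -- surjectivity
      intro c' hc'
      rw [Finset.mem_Icc] at hc'
      have hdm : l * ((c'-1)/l) + (c'-1) % l = c' - 1 := Nat.div_add_mod _ _
      have hmod : (c'-1) % l < l := Nat.mod_lt _ hl
      set cc := (c'-1)/l with hccdef
      have hccq : cc < q := by
        rw [hccdef, Nat.div_lt_iff_lt_mul hl]
        have : q * l = l * q := mul_comm _ _
        omega
      obtain ⟨x0, hx0⟩ := hnonempty cc hccq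
      have hsp := hΨ3 cc x0 hx0
      have hmemc : (c'-1) % l + 1 ∈ spectX (E.filter (fun e => gr e.1 = cc)) (Ψ cc) x0 := by
        rw [hsp, Finset.mem_Icc]
        omega
      rw [spectX, Finset.mem_image] at hmemc
      obtain ⟨e, hef, hee⟩ := hmemc
      rw [Finset.mem_filter, Finset.mem_filter] at hef
      refine ⟨e, hef.1.1, ?_⟩
      have hgre : gr e.1 = cc := hef.1.2
      show gr e.1 * l + Ψ (gr e.1) e = c'
      rw [hgre, hee]
      have : cc * l = l * cc := mul_comm _ _
      omega
    · -- properness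
      intro e he e' he' hne hadj
      by_cases hcc : gr e.1 = gr e'.1
      · have hmem : e ∈ E.filter (fun f => gr f.1 = gr e.1) := Finset.mem_filter.2 ⟨he, rfl⟩
        have hmem' : e' ∈ E.filter (fun f => gr f.1 = gr e.1) :=
          Finset.mem_filter.2 ⟨he', hcc.symm⟩
        have := hΨ2 (gr e.1) e hmem e' hmem' hne hadj
        show gr e.1 * l + Ψ (gr e.1) e ≠ gr e'.1 * l + Ψ (gr e'.1) e'
        rw [← hcc]
        omega
      · have hmem : e ∈ E.filter (fun f => gr f.1 = gr e.1) := Finset.mem_filter.2 ⟨he, rfl⟩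
        have hmem' : e' ∈ E.filter (fun f => gr f.1 = gr e'.1) := Finset.mem_filter.2 ⟨he', rfl⟩
        have hb := Finset.mem_Icc.1 (hΨ1 (gr e.1) e hmem)
        have hb' := Finset.mem_Icc.1 (hΨ1 (gr e'.1) e' hmem')
        show gr e.1 * l + Ψ (gr e.1) e ≠ gr e'.1 * l + Ψ (gr e'.1) e'
        rcases Nat.lt_or_ge (gr e.1) (gr e'.1) with h | h
        · have h6 : (gr e.1 + 1) * l ≤ gr e'.1 * l := Nat.mul_le_mul_right l h
          have h7 : (gr e.1 + 1) * l = gr e.1 * l + l := by ring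
          omega
        · have h : gr e'.1 < gr e.1 := by omega
          have h6 : (gr e'.1 + 1) * l ≤ gr e.1 * l := Nat.mul_le_mul_right l h
          have h7 : (gr e'.1 + 1) * l = gr e'.1 * l + l := by ring
          omega
    · -- interval on X
      intro x _
      have hspec : spectX E (fun e => gr e.1 * l + Ψ (gr e.1) e) x
          = (spectX (E.filter (fun e => gr e.1 = gr x)) (Ψ (gr x)) x).image
              (fun v => gr x * l + v) := by
        apply spectX_shift_class E gr (gr x) x rfl
        intro e hee
        rw [hee]
      rw [hspec, hΨ3 (gr x) x rfl, Finset.image_add_left_Icc]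
      exact isIntervalIcc _ _ (by omega)
  · -- case l ∤ t : P aligned groups plus a shifted supergroup
    have hd1 : 1 ≤ d := by omega
    have hl2 : 2 ≤ l := by omega
    have hqm' : q + 1 ≤ m := by
      by_contra h
      push_neg at h
      have h3 : l * m ≤ l * q := Nat.mul_le_mul_left l (by omega)
      have h4 : l * m = m * l := mul_comm _ _
      omega
    have hm2 : 2 ≤ m := by omega
    obtain ⟨P, hP⟩ : ∃ P, q = P + 1 := ⟨q - 1, by omega⟩
    have hPl : P * l + l = l * q := by rw [hP]; ring
    have hPlt : P * l + l + d = t := by omega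
    set M := max 2 (m - P * l) with hM
    have hM2 : 2 ≤ M := le_max_left _ _
    have hMge : m - P * l ≤ M := le_max_right _ _
    have hMchoice : M = 2 ∨ M = m - P * l := max_choice _ _
    have hMl : M ≤ l := by rcases hMchoice with h | h <;> omega
    have hMm : M ≤ m := by rcases hMchoice with h | h <;> omega
    have hPP : P ≤ P * l := Nat.le_mul_of_pos_right P hl
    set N := m - M with hN
    have hNPl : N ≤ P * l := by rcases hMchoice with h | h <;> omega
    have hNP : P ≤ N := by rcases hMchoice with h | h <;> omega
    set gr : α → ℕ := fun x => if idx x < M then P else (idx x - M) * P / N with hgrdef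
    have hgrP : ∀ x, idx x < M → gr x = P := by
      intro x h
      show (if idx x < M then P else (idx x - M) * P / N) = P
      rw [if_pos h]
    have hgrlt : ∀ x, ¬(idx x < M) → gr x < P ∧ gr x = (idx x - M) * P / N := by
      intro x h
      have hxm := hidxlt x
      have hNpos : 0 < N := by omega
      have hPpos : 0 < P := by
        rcases Nat.eq_zero_or_pos P with h0 | h0
        · exfalso
          have hz : P * l = 0 := by rw [h0]; ring
          omega
        · exact h0
      have hval : gr x = (idx x - M) * P / N := by
        show (if idx x < M then P else (idx x - M) * P / N) = _
        rw [if_neg h]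
      refine ⟨?_, hval⟩
      rw [hval]
      exact chunk_lt hPpos (show idx x - M < N by omega)
    have hgr_iff : ∀ x, gr x = P ↔ idx x < M := by
      intro x
      constructor
      · intro hgr
        by_contra h
        have := (hgrlt x h).1
        omega
      · exact hgrP x
    have hgle : ∀ x, gr x ≤ P := by
      intro x
      by_cases h : idx x < M
      · rw [hgrP x h]
      · exact le_of_lt (hgrlt x h).1
    have hcard_super : (Finset.univ.filter (fun x => gr x = P)).card ≤ l := by
      calc (Finset.univ.filter (fun x => gr x = P)).card ≤ (Finset.range M).card := by
            apply Finset.card_le_card_of_injOn idx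
            · intro x hx
              rw [Finset.mem_coe, Finset.mem_range]
              exact (hgr_iff x).1 (Finset.mem_filter.1 hx).2
            · intro a _ b _ h
              exact hidxinj h
        _ = M := Finset.card_range M
        _ ≤ l := hMl
    have hcard_all : ∀ c, (Finset.univ.filter (fun x => gr x = c)).card ≤ l := by
      intro c
      rcases lt_trichotomy c P with hc | hc | hc
      · have hPpos : 0 < P := by omega
        have hNpos : 0 < N := by omega
        obtain ⟨lo, hlo⟩ := chunk_mem_Ico (N := N) (Q := P) (L := l) c hPpos hNPl hNpos
        calc (Finset.univ.filter (fun x => gr x = c)).card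
            ≤ (Finset.Ico (M + lo) (M + lo + l)).card := by
              apply Finset.card_le_card_of_injOn idx
              · intro x hx
                rw [Finset.mem_coe, Finset.mem_filter] at hx
                have hxnot : ¬(idx x < M) := by
                  intro hlt
                  rw [hgrP x hlt] at hx
                  omega
                obtain ⟨hlt, hval⟩ := hgrlt x hxnot
                have := hlo (idx x - M) (by have := hidxlt x; omega) (by rw [← hval]; exact hx.2)
                rw [Finset.mem_coe, Finset.mem_Ico]
                omega
              · intro a _ b _ h
                exact hidxinj h
          _ = l := by rw [Nat.card_Ico]; omega
      · rw [hc]; exact hcard_super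
      · have : Finset.univ.filter (fun x => gr x = c) = ∅ := by
          rw [Finset.filter_eq_empty_iff]
          intro x _
          have := hgle x
          omega
        rw [this]; simp
    have hnonempty : ∀ c, c < P → ∃ x : α, gr x = c := by
      intro c hc
      have hPpos : 0 < P := by omega
      obtain ⟨i, hiN, hic⟩ := chunk_surj c hPpos hNP hc
      have hMi : M + i < m := by omega
      refine ⟨he0.symm ⟨M + i, hMi⟩, ?_⟩
      have hidxv : idx (he0.symm ⟨M + i, hMi⟩) = M + i := hinv _ _
      have hnotlt : ¬(idx (he0.symm ⟨M + i, hMi⟩) < M) := by omega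
      rw [(hgrlt _ hnotlt).2, hidxv]
      have : M + i - M = i := by omega
      rw [this, hic]
    -- distinguished supergroup vertices
    have h0m : 0 < m := hm
    have h1m : 1 < m := hm2
    set u : α := he0.symm ⟨0, h0m⟩ with hu0
    set v : α := he0.symm ⟨1, h1m⟩ with hv0
    have hidxu : idx u = 0 := hinv _ _
    have hidxv : idx v = 1 := hinv _ _
    have hu : gr u = P := hgrP u (by omega)
    have hv : gr v = P := hgrP v (by omega)
    have hvu : v ≠ u := by
      intro h
      have := congrArg idx h
      omega
    obtain ⟨ψP, hs1, hs2, hs3, hs4⟩ :=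
      classShiftSetup E l d hd1 (le_of_lt hdl) hdX gr P u v hu hv hvu hcard_super
    have hcol : ∀ c, ∃ ψ : α × β → ℕ,
        (∀ e ∈ E.filter (fun e => gr e.1 = c), ψ e ∈ Finset.Icc 1 l) ∧
        (∀ e ∈ E.filter (fun e => gr e.1 = c), ∀ e' ∈ E.filter (fun e => gr e.1 = c),
          e ≠ e' → (e.1 = e'.1 ∨ e.2 = e'.2) → ψ e ≠ ψ e') ∧
        (∀ x : α, gr x = c → spectX (E.filter (fun e => gr e.1 = c)) ψ x = Finset.Icc 1 l) :=
      fun c => classSetup E l hdX gr c (hcard_all c)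
    choose Ψ hΨ1 hΨ2 hΨ3 using hcol
    set φ : α × β → ℕ :=
      fun e => if gr e.1 = P then P * l + ψP e else gr e.1 * l + Ψ (gr e.1) e with hφdef
    have hφsuper : ∀ e : α × β, gr e.1 = P → φ e = P * l + ψP e := by
      intro e h
      show (if gr e.1 = P then P * l + ψP e else gr e.1 * l + Ψ (gr e.1) e) = _
      rw [if_pos h]
    have hφplain : ∀ e : α × β, gr e.1 ≠ P → φ e = gr e.1 * l + Ψ (gr e.1) e := by
      intro e h
      show (if gr e.1 = P then P * l + ψP e else gr e.1 * l + Ψ (gr e.1) e) = _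
      rw [if_neg h]
    -- generic bounds
    have hbound : ∀ e ∈ E, gr e.1 * l + 1 ≤ φ e ∧ φ e ≤ gr e.1 * l + l + d := by
      intro e he
      by_cases hc : gr e.1 = P
      · have hb := Finset.mem_Icc.1 (hs1 e (Finset.mem_filter.2 ⟨he, hc⟩))
        rw [hφsuper e hc, hc]
        omega
      · have hb := Finset.mem_Icc.1 (hΨ1 (gr e.1) e (Finset.mem_filter.2 ⟨he, rfl⟩))
        rw [hφplain e hc]
        omega
    have hboundp : ∀ e ∈ E, gr e.1 ≠ P → φ e ≤ gr e.1 * l + l := by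
      intro e he hc
      have hb := Finset.mem_Icc.1 (hΨ1 (gr e.1) e (Finset.mem_filter.2 ⟨he, rfl⟩))
      rw [hφplain e hc]
      omega
    refine ⟨φ, ⟨?_, ?_, ?_⟩, ?_⟩
    · -- range
      intro e he
      have hb := hbound e he
      have hle := hgle e.1
      rw [Finset.mem_Icc]
      constructor
      · omega
      · have h6 : gr e.1 * l ≤ P * l := Nat.mul_le_mul_right l hle
        omega
    · -- surjectivity
      intro c' hc'
      rw [Finset.mem_Icc] at hc'
      by_cases hble : c' ≤ P * l
      · have hPpos : 0 < P := by
          rcases Nat.eq_zero_or_pos P with h0 | h0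
          · exfalso
            have hz : P * l = 0 := by rw [h0]; ring
            omega
          · exact h0
        have hdm : l * ((c'-1)/l) + (c'-1) % l = c' - 1 := Nat.div_add_mod _ _
        have hmod : (c'-1) % l < l := Nat.mod_lt _ hl
        set cc := (c'-1)/l with hccdef
        have hccq : cc < P := by
          rw [hccdef, Nat.div_lt_iff_lt_mul hl]
          have h8 : P * l = l * P := mul_comm _ _
          omega
        obtain ⟨x0, hx0⟩ := hnonempty cc hccq
        have hsp := hΨ3 cc x0 hx0
        have hmemc : (c'-1) % l + 1 ∈ spectX (E.filter (fun e => gr e.1 = cc)) (Ψ cc) x0 := by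
          rw [hsp, Finset.mem_Icc]
          omega
        rw [spectX, Finset.mem_image] at hmemc
        obtain ⟨e, hef, hee⟩ := hmemc
        rw [Finset.mem_filter, Finset.mem_filter] at hef
        refine ⟨e, hef.1.1, ?_⟩
        have hgre : gr e.1 = cc := hef.1.2
        rw [hφplain e (by omega), hgre, hee]
        have h9 : cc * l = l * cc := mul_comm _ _
        omega
      · have hcc' : c' - P * l ∈ Finset.Icc 1 (l + d) := by
          rw [Finset.mem_Icc]
          omega
        obtain ⟨e, hef, hee⟩ := hs4 _ hcc'
        rw [Finset.mem_filter] at hef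
        refine ⟨e, hef.1, ?_⟩
        rw [hφsuper e hef.2, hee]
        omega
    · -- properness
      intro e he e' he' hne hadj
      have key : ∀ f, f ∈ E → ∀ g, g ∈ E → gr f.1 < gr g.1 → φ f ≠ φ g := by
        intro f hf g hg hlt
        have hfP : gr f.1 ≠ P := by
          have := hgle g.1
          omega
        have h1 := hboundp f hf hfP
        have h2 := (hbound g hg).1
        have h6 : (gr f.1 + 1) * l ≤ gr g.1 * l := Nat.mul_le_mul_right l hlt
        have h7 : (gr f.1 + 1) * l = gr f.1 * l + l := by ring
        omega
      rcases lt_trichotomy (gr e.1) (gr e'.1) with h | hcc | h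
      · exact key e he e' he' h
      · by_cases hc : gr e.1 = P
        · have hc' : gr e'.1 = P := by rw [← hcc]; exact hc
          have := hs2 e (Finset.mem_filter.2 ⟨he, hc⟩) e' (Finset.mem_filter.2 ⟨he', hc'⟩)
            hne hadj
          rw [hφsuper e hc, hφsuper e' hc']
          omega
        · have hc' : gr e'.1 ≠ P := by rw [← hcc]; exact hc
          have hmem : e ∈ E.filter (fun f => gr f.1 = gr e.1) := Finset.mem_filter.2 ⟨he, rfl⟩
          have hmem' : e' ∈ E.filter (fun f => gr f.1 = gr e.1) :=
            Finset.mem_filter.2 ⟨he', hcc.symm⟩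
          have := hΨ2 (gr e.1) e hmem e' hmem' hne hadj
          rw [hφplain e hc, hφplain e' hc', ← hcc]
          omega
      · exact (key e' he' e he h).symm
    · -- interval on X
      intro x _
      by_cases hc : gr x = P
      · have hspec : spectX E φ x
            = (spectX (E.filter (fun e => gr e.1 = P)) ψP x).image (fun v => P * l + v) := by
          apply spectX_shift_class E gr P x hc ψP (P * l) φ
          intro e hee
          exact hφsuper e hee
        rcases hs3 x hc with h | h
        · rw [hspec, h, Finset.image_add_left_Icc]
          exact isIntervalIcc _ _ (by omega)
        · rw [hspec, h, Finset.image_add_left_Icc]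
          exact isIntervalIcc _ _ (by omega)
      · have hspec : spectX E φ x
            = (spectX (E.filter (fun e => gr e.1 = gr x)) (Ψ (gr x)) x).image
                (fun v => gr x * l + v) := by
          apply spectX_shift_class E gr (gr x) x rfl
          intro e hee
          rw [hφplain e (by rw [hee]; exact hc), hee]
        rw [hspec, hΨ3 (gr x) x rfl, Finset.image_add_left_Icc]
        exact isIntervalIcc _ _ (by omega)
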